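/- Let G = (V,E) be a connected locally finite graph. For every x ∈ V, all integers n ≥ 2 and 0 ≤ m ≤ n, and every real μ > 0, P_x( G_n(X_0,X_m) / P^m(X_0,X_m) ≥ e^{μ} ) ≤ (n+1)·e^{−μ}, where the probability is over the lazy random walk started at x (note P^m(X_0,X_m) > 0 almost surely since the walk is lazy). Equivalently, P_x( −log P^m(X_0,X_m) ≥ −log G_n(X_0,X_m) + μ ) ≤ (n+1)·e^{−μ}. -/

import Mathlib

open scoped Classical BigOperators

namespace LazyRW

variable {V : Type*}

/-- One-step transition kernel of the lazy simple random walk. -/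
noncomputable def step (G : SimpleGraph V) [G.LocallyFinite] (x y : V) : ℝ :=
  if x = y then 1/2 else if G.Adj x y then 1 / (2 * (G.degree x)) else 0

/-- Probability of a given path of length `n` for the lazy walk started at `x`. -/
noncomputable def pathProb (G : SimpleGraph V) [G.LocallyFinite]
    (n : ℕ) (x : V) (p : Fin (n+1) → V) : ℝ :=
  (if p 0 = x then 1 else 0) * ∏ i : Fin n, step G (p i.castSucc) (p i.succ)

/-- Probability of an event determined by the first `n` steps of the lazy walk started at `x`. -/
noncomputable def walkProb (G : SimpleGraph V) [G.LocallyFinite]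
    (n : ℕ) (x : V) (E : Set (Fin (n+1) → V)) : ℝ :=
  ∑' p : (Fin (n+1) → V), pathProb G n x p * E.indicator (fun _ => (1:ℝ)) p

/-- Expectation of a functional of the first `n` steps of the lazy walk started at `x`. -/
noncomputable def walkExp (G : SimpleGraph V) [G.LocallyFinite]
    (n : ℕ) (x : V) (f : (Fin (n+1) → V) → ℝ) : ℝ :=
  ∑' p : (Fin (n+1) → V), pathProb G n x p * f p

/-- `n`-th power of the lazy transition matrix. -/
noncomputable def Pmat (G : SimpleGraph V) [G.LocallyFinite] : ℕ → V → V → ℝ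
  | 0, x, y => if x = y then 1 else 0
  | (n+1), x, y => ∑' z, Pmat G n x z * step G z y

/-- Total variation profile `TV_n`. -/
noncomputable def TV (G : SimpleGraph V) [G.LocallyFinite] (n : ℕ) : ℝ :=
  ⨆ e : {p : V × V // G.Adj p.1 p.2},
    (1/2) * ∑' z, |Pmat G n e.val.1 z - Pmat G n e.val.2 z|

/-- Expected graph-distance displacement at time `m`. -/
noncomputable def expDist (G : SimpleGraph V) [G.LocallyFinite] (m : ℕ) (x : V) : ℝ :=
  walkExp G m x (fun p => (G.dist (p 0) (p (Fin.last m)) : ℝ))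

/-- `D_n^*`: supremal expected displacement up to time `n`. -/
noncomputable def Dstar (G : SimpleGraph V) [G.LocallyFinite] (n : ℕ) : ℝ :=
  ⨆ x : V, ⨆ m : Fin (n+1), expDist G m.1 x

/-- Entropy of the walk at time `m` started at `x`. -/
noncomputable def entropy (G : SimpleGraph V) [G.LocallyFinite] (m : ℕ) (x : V) : ℝ :=
  ∑' y : V, Real.negMulLog (Pmat G m x y)

/-- `H_n^*`: supremal entropy up to time `n`. -/
noncomputable def Hstar (G : SimpleGraph V) [G.LocallyFinite] (n : ℕ) : ℝ :=
  ⨆ x : V, ⨆ m : Fin (n+1), entropy G m.1 x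

/-- `|∂W|`: the number of edges with exactly one endpoint in `W`. -/
noncomputable def boundaryCard (G : SimpleGraph V) [G.LocallyFinite] (W : Finset V) : ℕ :=
  ∑ w ∈ W, ((G.neighborFinset w).filter (fun z => z ∉ W)).card

/-- `deg(W)`: the sum of degrees of vertices in `W`. -/
noncomputable def degSum (G : SimpleGraph V) [G.LocallyFinite] (W : Finset V) : ℕ :=
  ∑ w ∈ W, G.degree w

/-- The isoperimetric profile `Φ(n)`. -/
noncomputable def isoProfile (G : SimpleGraph V) [G.LocallyFinite] (n : ℕ) : ℝ :=
  ⨅ W : {W : Finset V // W.Nonempty ∧ degSum G W ≤ n},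
    (boundaryCard G W.1 : ℝ) / (degSum G W.1 : ℝ)

/-- `q_m(u,v)`: probability that the lazy walk started at `u` first visits `v` at time `m`. -/
noncomputable def firstHit (G : SimpleGraph V) [G.LocallyFinite] (m : ℕ) (u v : V) : ℝ :=
  walkProb G m u {p | p (Fin.last m) = v ∧ ∀ i : Fin (m+1), i ≠ Fin.last m → p i ≠ v}

/-- The massive Green function `G_t(u,v)`. -/
noncomputable def greenT (G : SimpleGraph V) [G.LocallyFinite] (t : ℝ) (u v : V) : ℝ :=
  ∑' m : ℕ, (t/(t+1))^m * firstHit G m u v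



section AuxProof

variable (G : SimpleGraph V) [G.LocallyFinite]

lemma step_nonneg' (x y : V) : 0 ≤ step G x y := by
  unfold step; split_ifs <;> positivity

lemma step_eq_zero_left {z y : V} (h : z ∉ insert y (G.neighborFinset y)) :
    step G z y = 0 := by
  simp only [Finset.mem_insert, SimpleGraph.mem_neighborFinset] at h
  push_neg at h
  unfold step
  rw [if_neg h.1, if_neg (fun ha => h.2 ha.symm)]

lemma step_eq_zero_right {z y : V} (h : y ∉ insert z (G.neighborFinset z)) :
    step G z y = 0 := by
  simp only [Finset.mem_insert, SimpleGraph.mem_neighborFinset] at h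
  push_neg at h
  unfold step
  rw [if_neg (fun ha => h.1 ha.symm), if_neg h.2]

lemma step_row_sum_le_one (z : V) (Y : Finset V) : ∑ y ∈ Y, step G z y ≤ 1 := by
  classical
  have hzero : ∀ y ∈ Y, y ∉ Y ∩ insert z (G.neighborFinset z) → step G z y = 0 := by
    intro y hy hy'
    exact step_eq_zero_right G (fun h => hy' (Finset.mem_inter.2 ⟨hy, h⟩))
  rw [← Finset.sum_subset Finset.inter_subset_left hzero]
  have hsub : ∑ y ∈ Y ∩ insert z (G.neighborFinset z), step G z y
      ≤ ∑ y ∈ insert z (G.neighborFinset z), step G z y :=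
    Finset.sum_le_sum_of_subset_of_nonneg Finset.inter_subset_right
      (fun y _ _ => step_nonneg' G z y)
  refine hsub.trans ?_
  have hz : z ∉ G.neighborFinset z := by simp
  rw [Finset.sum_insert hz]
  have hzz : step G z z = 1/2 := by unfold step; simp
  have hnb : ∀ y ∈ G.neighborFinset z, step G z y = 1/(2*(G.degree z : ℝ)) := by
    intro y hy
    have hadj : G.Adj z y := (SimpleGraph.mem_neighborFinset G z y).1 hy
    unfold step
    rw [if_neg hadj.ne, if_pos hadj]
  rw [hzz, Finset.sum_congr rfl hnb, Finset.sum_const,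
    SimpleGraph.card_neighborFinset_eq_degree, nsmul_eq_mul]
  rcases Nat.eq_zero_or_pos (G.degree z) with h0 | hpos
  · rw [h0]; norm_num
  · have hd : (G.degree z : ℝ) ≠ 0 := Nat.cast_ne_zero.2 hpos.ne'
    rw [show (G.degree z : ℝ) * (1/(2*(G.degree z : ℝ))) = 1/2 by field_simp]
    norm_num

lemma Pmat_nonneg' : ∀ (m : ℕ) (x y : V), 0 ≤ Pmat G m x y := by
  intro m
  induction m with
  | zero => intro x y; unfold Pmat; positivity
  | succ m ih =>
    intro x y
    have h : Pmat G (m+1) x y = ∑' z, Pmat G m x z * step G z y := rfl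
    rw [h]
    exact tsum_nonneg fun z => mul_nonneg (ih x z) (step_nonneg' G z y)

lemma Pmat_succ_eq (m : ℕ) (x y : V) :
    Pmat G (m+1) x y
      = ∑ z ∈ insert y (G.neighborFinset y), Pmat G m x z * step G z y := by
  have h : Pmat G (m+1) x y = ∑' z, Pmat G m x z * step G z y := rfl
  rw [h]
  exact tsum_eq_sum (f := fun z => Pmat G m x z * step G z y)
    (fun z hz => by show Pmat G m x z * step G z y = 0; rw [step_eq_zero_left G hz, mul_zero])

lemma Pmat_row_sum_le_one (x : V) :
    ∀ (m : ℕ) (Y : Finset V), ∑ y ∈ Y, Pmat G m x y ≤ 1 := by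
  intro m
  induction m with
  | zero =>
    intro Y
    unfold Pmat
    rw [Finset.sum_ite_eq Y x (fun _ => (1:ℝ))]
    split_ifs <;> norm_num
  | succ m ih =>
    intro Y
    classical
    set Z := Y.biUnion (fun y => insert y (G.neighborFinset y)) with hZ
    have hsub : ∀ y ∈ Y, insert y (G.neighborFinset y) ⊆ Z :=
      fun y hy => Finset.subset_biUnion_of_mem (fun y => insert y (G.neighborFinset y)) hy
    calc ∑ y ∈ Y, Pmat G (m+1) x y
        = ∑ y ∈ Y, ∑ z ∈ Z, Pmat G m x z * step G z y := by
          refine Finset.sum_congr rfl fun y hy => ?_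
          rw [Pmat_succ_eq]
          exact Finset.sum_subset (hsub y hy)
            (fun z _ hz => by rw [step_eq_zero_left G hz, mul_zero])
      _ = ∑ z ∈ Z, Pmat G m x z * ∑ y ∈ Y, step G z y := by
          rw [Finset.sum_comm]
          exact Finset.sum_congr rfl fun z _ => (Finset.mul_sum _ _ _).symm
      _ ≤ ∑ z ∈ Z, Pmat G m x z * 1 :=
          Finset.sum_le_sum fun z _ =>
            mul_le_mul_of_nonneg_left (step_row_sum_le_one G z Y) (Pmat_nonneg' G m x z)
      _ ≤ 1 := by simpa using ih Z

lemma pathProb_nonneg' (m : ℕ) (x : V) (p : Fin (m+1) → V) :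
    0 ≤ pathProb G m x p := by
  unfold pathProb
  refine mul_nonneg (by positivity) (Finset.prod_nonneg fun i _ => step_nonneg' G _ _)

lemma pathProb_succ (m : ℕ) (x : V) (p : Fin (m+2) → V) :
    pathProb G (m+1) x p
      = pathProb G m x (Fin.init p)
        * step G (p (Fin.castSucc (Fin.last m))) (p (Fin.last (m+1))) := by
  unfold pathProb
  rw [Fin.prod_univ_castSucc]
  simp only [Fin.init, Fin.succ_last, ← Fin.succ_castSucc, Fin.castSucc_zero]
  rw [mul_assoc, mul_comm]
  exact mul_comm _ _

lemma sum_pathProb_le (x : V) :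
    ∀ (m : ℕ) (y : V) (S : Finset (Fin (m+1) → V)),
      (∀ p ∈ S, p (Fin.last m) = y) → ∑ p ∈ S, pathProb G m x p ≤ Pmat G m x y := by
  intro m
  induction m with
  | zero =>
    intro y S hS
    classical
    have hsub : S ⊆ {fun _ => y} := by
      intro p hp
      simp only [Finset.mem_singleton]
      funext i
      have hi : i = Fin.last 0 := by
        apply Fin.ext
        have := i.isLt
        simp only [Fin.val_last]
        omega
      rw [hi]; exact hS p hp
    calc ∑ p ∈ S, pathProb G 0 x p
        ≤ ∑ p ∈ ({fun _ => y} : Finset (Fin 1 → V)), pathProb G 0 x p :=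
          Finset.sum_le_sum_of_subset_of_nonneg hsub
            (fun p _ _ => pathProb_nonneg' G 0 x p)
      _ ≤ Pmat G 0 x y := by
          rw [Finset.sum_singleton]
          unfold pathProb Pmat
          simp only [Finset.univ_eq_empty, Finset.prod_empty, mul_one]
          split_ifs with h1 h2 h2
          · exact le_refl 1
          · exact absurd h1.symm h2
          · norm_num
          · exact le_refl 0
  | succ m ih =>
    intro y S hS
    classical
    have hterm : ∀ p ∈ S,
        pathProb G (m+1) x p
          = pathProb G m x (Fin.init p) * step G ((Fin.init p) (Fin.last m)) y := by
      intro p hp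
      rw [pathProb_succ, hS p hp]; rfl
    rw [Finset.sum_congr rfl hterm]
    have hinj : ∀ p ∈ S, ∀ q ∈ S, Fin.init p = Fin.init q → p = q := by
      intro p hp q hq h
      funext i
      rcases Fin.eq_castSucc_or_eq_last i with ⟨j, rfl⟩ | rfl
      · exact congrFun h j
      · rw [hS p hp, hS q hq]
    rw [show (∑ p ∈ S, pathProb G m x (Fin.init p) * step G ((Fin.init p) (Fin.last m)) y)
        = ∑ q ∈ S.image Fin.init, pathProb G m x q * step G (q (Fin.last m)) y from
      (Finset.sum_image (f := fun q => pathProb G m x q * step G (q (Fin.last m)) y) hinj).symm]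
    set T := S.image Fin.init with hT
    set Z := T.image (fun q => q (Fin.last m)) with hZdef
    rw [← Finset.sum_fiberwise_of_maps_to
      (fun q hq => Finset.mem_image_of_mem (fun q => q (Fin.last m)) hq)
      (fun q => pathProb G m x q * step G (q (Fin.last m)) y)]
    have hfib : ∀ z ∈ Z,
        ∑ q ∈ T.filter (fun q => q (Fin.last m) = z),
            pathProb G m x q * step G (q (Fin.last m)) y
          ≤ Pmat G m x z * step G z y := by
      intro z _
      have : ∑ q ∈ T.filter (fun q => q (Fin.last m) = z),
            pathProb G m x q * step G (q (Fin.last m)) y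
          = (∑ q ∈ T.filter (fun q => q (Fin.last m) = z), pathProb G m x q) * step G z y := by
        rw [Finset.sum_mul]
        refine Finset.sum_congr rfl fun q hq => ?_
        rw [(Finset.mem_filter.1 hq).2]
      rw [this]
      exact mul_le_mul_of_nonneg_right
        (ih z _ (fun q hq => (Finset.mem_filter.1 hq).2)) (step_nonneg' G z y)
    refine (Finset.sum_le_sum hfib).trans ?_
    rw [Pmat_succ_eq]
    have hvan : ∀ z ∈ Z, z ∉ Z ∩ insert y (G.neighborFinset y) →
        Pmat G m x z * step G z y = 0 := fun z hz hz' => by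
      rw [step_eq_zero_left G (fun h => hz' (Finset.mem_inter.2 ⟨hz, h⟩)), mul_zero]
    rw [← Finset.sum_subset Finset.inter_subset_left hvan]
    exact Finset.sum_le_sum_of_subset_of_nonneg Finset.inter_subset_right
      (fun z _ _ => mul_nonneg (Pmat_nonneg' G m x z) (step_nonneg' G z y))

lemma indicator_le_one' (E : Set (Fin (m+1) → V)) (p : Fin (m+1) → V) :
    E.indicator (fun _ => (1:ℝ)) p ≤ 1 := by
  classical
  by_cases hp : p ∈ E <;> simp [Set.indicator, hp]

lemma walkProb_nonneg' (m : ℕ) (x : V) (E : Set (Fin (m+1) → V)) :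
    0 ≤ walkProb G m x E :=
  tsum_nonneg fun p => mul_nonneg (pathProb_nonneg' G m x p)
    (Set.indicator_nonneg (fun _ _ => zero_le_one) p)

lemma firstHit_le_Pmat (m : ℕ) (x y : V) : firstHit G m x y ≤ Pmat G m x y := by
  classical
  unfold firstHit walkProb
  refine tsum_le_of_sum_le' (Pmat_nonneg' G m x y) (fun S => ?_)
  have h1 : ∑ p ∈ S, pathProb G m x p *
        Set.indicator {p | p (Fin.last m) = y ∧ ∀ i : Fin (m+1), i ≠ Fin.last m → p i ≠ y}
          (fun _ => (1:ℝ)) p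
      ≤ ∑ p ∈ S.filter (fun p => p (Fin.last m) = y), pathProb G m x p := by
    rw [Finset.sum_filter]
    refine Finset.sum_le_sum fun p _ => ?_
    by_cases h : p (Fin.last m) = y
    · rw [if_pos h]
      calc pathProb G m x p *
            Set.indicator {p | p (Fin.last m) = y ∧ ∀ i : Fin (m+1), i ≠ Fin.last m → p i ≠ y}
              (fun _ => (1:ℝ)) p
          ≤ pathProb G m x p * 1 :=
            mul_le_mul_of_nonneg_left (indicator_le_one' _ _) (pathProb_nonneg' G m x p)
        _ = pathProb G m x p := mul_one _
    · rw [if_neg h]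
      have hp : p ∉ {p : Fin (m+1) → V | p (Fin.last m) = y ∧
          ∀ i : Fin (m+1), i ≠ Fin.last m → p i ≠ y} := fun hp => h hp.1
      rw [Set.indicator_of_notMem hp, mul_zero]
  exact h1.trans (sum_pathProb_le G x m y _ (fun p hp => (Finset.mem_filter.1 hp).2))

lemma firstHit_nonneg' (m : ℕ) (x y : V) : 0 ≤ firstHit G m x y :=
  walkProb_nonneg' G m x _

lemma greenT_nonneg' (t : ℝ) (ht : 0 ≤ t) (x y : V) : 0 ≤ greenT G t x y := by
  unfold greenT
  refine tsum_nonneg fun k => mul_nonneg (pow_nonneg ?_ k) (firstHit_nonneg' G k x y)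
  exact div_nonneg ht (by linarith)

lemma greenT_sum_le (x : V) (t : ℝ) (ht : 0 ≤ t) (Y : Finset V) :
    ∑ y ∈ Y, greenT G t x y ≤ t + 1 := by
  classical
  have ht1 : (0:ℝ) < t + 1 := by linarith
  have hr0 : 0 ≤ t/(t+1) := div_nonneg ht ht1.le
  have hr1 : t/(t+1) < 1 := (div_lt_one ht1).2 (by linarith)
  have hgeo := summable_geometric_of_lt_one hr0 hr1
  have hfh_le : ∀ (k : ℕ) (y : V), firstHit G k x y ≤ 1 := by
    intro k y
    refine (firstHit_le_Pmat G k x y).trans ?_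
    simpa using Pmat_row_sum_le_one G x k {y}
  have hsummable : ∀ y : V, Summable (fun k : ℕ => (t/(t+1))^k * firstHit G k x y) := by
    intro y
    refine Summable.of_nonneg_of_le
      (fun k => mul_nonneg (pow_nonneg hr0 k) (firstHit_nonneg' G k x y))
      (fun k => ?_) hgeo
    calc (t/(t+1))^k * firstHit G k x y ≤ (t/(t+1))^k * 1 :=
          mul_le_mul_of_nonneg_left (hfh_le k y) (pow_nonneg hr0 k)
      _ = (t/(t+1))^k := mul_one _
  unfold greenT
  rw [← Summable.tsum_finsetSum (fun y _ => hsummable y)]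
  have hle : ∑' k : ℕ, ∑ y ∈ Y, (t/(t+1))^k * firstHit G k x y ≤ ∑' k : ℕ, (t/(t+1))^k := by
    refine Summable.tsum_le_tsum (fun k => ?_) (summable_sum (fun y _ => hsummable y)) hgeo
    rw [← Finset.mul_sum]
    calc (t/(t+1))^k * ∑ y ∈ Y, firstHit G k x y ≤ (t/(t+1))^k * 1 := by
          refine mul_le_mul_of_nonneg_left ?_ (pow_nonneg hr0 k)
          calc ∑ y ∈ Y, firstHit G k x y ≤ ∑ y ∈ Y, Pmat G k x y :=
                Finset.sum_le_sum fun y _ => firstHit_le_Pmat G k x y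
            _ ≤ 1 := Pmat_row_sum_le_one G x k Y
      _ = (t/(t+1))^k := mul_one _
  refine hle.trans ?_
  rw [tsum_geometric_of_lt_one hr0 hr1]
  have h1 : (1:ℝ) - t/(t+1) = 1/(t+1) := by field_simp; ring
  rw [h1, one_div, inv_inv]

end AuxProof

/-- tail bound for the ratio of the massive Green function (with parameter `n`)
to the transition probability. -/
theorem statement13 (V : Type) (G : SimpleGraph V) [G.LocallyFinite]
    (hconn : G.Connected) (x : V) (n m : ℕ) (hn : 2 ≤ n) (hm : m ≤ n)
    (mu : ℝ) (hmu : 0 < mu) :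
    walkProb G m x
        {p | Real.exp mu
              ≤ greenT G (n : ℝ) (p 0) (p (Fin.last m)) / Pmat G m (p 0) (p (Fin.last m))}
      ≤ ((n : ℝ) + 1) * Real.exp (-mu) := by
  classical
  have ht : (0:ℝ) ≤ (n:ℝ) := Nat.cast_nonneg n
  set Ev : Set (Fin (m+1) → V) :=
    {p | Real.exp mu
      ≤ greenT G (n : ℝ) (p 0) (p (Fin.last m)) / Pmat G m (p 0) (p (Fin.last m))} with hEv
  set g : V → ℝ :=
    fun y => min 1 (Real.exp (-mu) * (greenT G (n:ℝ) x y / Pmat G m x y)) with hg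
  have hg0 : ∀ y, 0 ≤ g y := by
    intro y
    refine le_min zero_le_one ?_
    exact mul_nonneg (Real.exp_nonneg _)
      (div_nonneg (greenT_nonneg' G (n:ℝ) ht x y) (Pmat_nonneg' G m x y))
  unfold walkProb
  refine tsum_le_of_sum_le' (by positivity) (fun S => ?_)
  have hpt : ∀ p ∈ S,
      pathProb G m x p * Ev.indicator (fun _ => (1:ℝ)) p
        ≤ pathProb G m x p * g (p (Fin.last m)) := by
    intro p _
    rcases eq_or_ne (p 0) x with h0 | h0
    · refine mul_le_mul_of_nonneg_left ?_ (pathProb_nonneg' G m x p)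
      by_cases hp : p ∈ Ev
      · rw [Set.indicator_of_mem hp]
        have hple : Real.exp mu
            ≤ greenT G (n:ℝ) x (p (Fin.last m)) / Pmat G m x (p (Fin.last m)) := by
          have := hp
          rw [hEv] at this
          simpa [h0] using this
        refine le_min le_rfl ?_
        calc (1:ℝ) = Real.exp (-mu) * Real.exp mu := by
              rw [← Real.exp_add]; simp
          _ ≤ Real.exp (-mu)
                * (greenT G (n:ℝ) x (p (Fin.last m)) / Pmat G m x (p (Fin.last m))) :=
              mul_le_mul_of_nonneg_left hple (Real.exp_nonneg _)
      · rw [Set.indicator_of_notMem hp]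
        exact hg0 _
    · have hz : pathProb G m x p = 0 := by
        unfold pathProb
        rw [if_neg h0, zero_mul]
      rw [hz, zero_mul, zero_mul]
  set Y := S.image (fun p => p (Fin.last m)) with hY
  calc ∑ p ∈ S, pathProb G m x p * Ev.indicator (fun _ => (1:ℝ)) p
      ≤ ∑ p ∈ S, pathProb G m x p * g (p (Fin.last m)) := Finset.sum_le_sum hpt
    _ = ∑ y ∈ Y, ∑ p ∈ S.filter (fun p => p (Fin.last m) = y),
          pathProb G m x p * g (p (Fin.last m)) :=
        (Finset.sum_fiberwise_of_maps_to
          (fun p hp => Finset.mem_image_of_mem (fun p => p (Fin.last m)) hp)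
          (fun p => pathProb G m x p * g (p (Fin.last m)))).symm
    _ ≤ ∑ y ∈ Y, Pmat G m x y * g y := by
        refine Finset.sum_le_sum fun y _ => ?_
        have heq : ∑ p ∈ S.filter (fun p => p (Fin.last m) = y),
              pathProb G m x p * g (p (Fin.last m))
            = (∑ p ∈ S.filter (fun p => p (Fin.last m) = y), pathProb G m x p) * g y := by
          rw [Finset.sum_mul]
          refine Finset.sum_congr rfl fun p hp => ?_
          rw [(Finset.mem_filter.1 hp).2]
        rw [heq]
        exact mul_le_mul_of_nonneg_right
          (sum_pathProb_le G x m y _ (fun p hp => (Finset.mem_filter.1 hp).2)) (hg0 y)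
    _ ≤ ∑ y ∈ Y, Real.exp (-mu) * greenT G (n:ℝ) x y := by
        refine Finset.sum_le_sum fun y _ => ?_
        rcases eq_or_lt_of_le (Pmat_nonneg' G m x y) with hP | hP
        · rw [← hP, zero_mul]
          exact mul_nonneg (Real.exp_nonneg _) (greenT_nonneg' G (n:ℝ) ht x y)
        · calc Pmat G m x y * g y
              ≤ Pmat G m x y * (Real.exp (-mu) * (greenT G (n:ℝ) x y / Pmat G m x y)) :=
              mul_le_mul_of_nonneg_left (min_le_right _ _) (Pmat_nonneg' G m x y)
            _ = Real.exp (-mu) * greenT G (n:ℝ) x y := by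
              field_simp
    _ = Real.exp (-mu) * ∑ y ∈ Y, greenT G (n:ℝ) x y := (Finset.mul_sum _ _ _).symm
    _ ≤ Real.exp (-mu) * ((n:ℝ) + 1) :=
        mul_le_mul_of_nonneg_left (greenT_sum_le G x (n:ℝ) ht Y) (Real.exp_nonneg _)
    _ = ((n : ℝ) + 1) * Real.exp (-mu) := mul_comm _ _

end LazyRW
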